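/- The subgroup K = {A = (a, b; c, d) ∈ Γ(2) : c ≡ 0 (mod 6)} has index 4 in Γ(2). (This is the index |G_∞ : G_∞ ∩ G_∞^{M_3}| for the degree-3 classical modular equation.) -/

import Mathlib

open Matrix CongruenceSubgroup

/-- The subgroup of `SL(2, ℤ)` of matrices whose lower-left entry is divisible by `n`. -/
def lowerLeftDvd (n : ℤ) : Subgroup (Matrix.SpecialLinearGroup (Fin 2) ℤ) where
  carrier := {A | n ∣ (A : Matrix (Fin 2) (Fin 2) ℤ) 1 0}
  one_mem' := by simp
  mul_mem' := by
    intro A B hA hB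
    have h : ((A * B : Matrix.SpecialLinearGroup (Fin 2) ℤ) : Matrix (Fin 2) (Fin 2) ℤ) 1 0 =
        (A : Matrix (Fin 2) (Fin 2) ℤ) 1 0 * (B : Matrix (Fin 2) (Fin 2) ℤ) 0 0 +
        (A : Matrix (Fin 2) (Fin 2) ℤ) 1 1 * (B : Matrix (Fin 2) (Fin 2) ℤ) 1 0 := by
      rw [Matrix.SpecialLinearGroup.coe_mul, Matrix.mul_apply, Fin.sum_univ_two]
    rw [Set.mem_setOf_eq, h]
    exact dvd_add (hA.mul_right _) (hB.mul_left _)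
  inv_mem' := by
    intro A hA
    have h : ((A⁻¹ : Matrix.SpecialLinearGroup (Fin 2) ℤ) : Matrix (Fin 2) (Fin 2) ℤ) 1 0 =
        -((A : Matrix (Fin 2) (Fin 2) ℤ) 1 0) := by
      rw [Matrix.SpecialLinearGroup.coe_inv, Matrix.adjugate_fin_two]
      simp
    rw [Set.mem_setOf_eq, h]
    exact dvd_neg.mpr hA

namespace IndexKAux

/-- The `(0,0)` entry mod 3. -/
noncomputable def aa (g : Gamma 2) : ZMod 3 :=
  (((g : Matrix.SpecialLinearGroup (Fin 2) ℤ) : Matrix (Fin 2) (Fin 2) ℤ) 0 0 : ZMod 3)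

/-- The `(1,0)` entry mod 3. -/
noncomputable def cc (g : Gamma 2) : ZMod 3 :=
  (((g : Matrix.SpecialLinearGroup (Fin 2) ℤ) : Matrix (Fin 2) (Fin 2) ℤ) 1 0 : ZMod 3)

/-- Invariant of the coset: the point `[a : c]` of `P¹(𝔽₃)`. -/
noncomputable def F (g : Gamma 2) : Option (ZMod 3) :=
  if aa g = 0 then none else some (cc g / aa g)

lemma not_both_zero (g : Gamma 2) : ¬ (aa g = 0 ∧ cc g = 0) := by
  rintro ⟨ha, hc⟩
  have hdet : ((g : Matrix.SpecialLinearGroup (Fin 2) ℤ) :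
      Matrix (Fin 2) (Fin 2) ℤ).det = 1 := (g : Matrix.SpecialLinearGroup (Fin 2) ℤ).property
  rw [Matrix.det_fin_two] at hdet
  have : ((((g : Matrix.SpecialLinearGroup (Fin 2) ℤ) : Matrix (Fin 2) (Fin 2) ℤ) 0 0 *
      ((g : Matrix.SpecialLinearGroup (Fin 2) ℤ) : Matrix (Fin 2) (Fin 2) ℤ) 1 1 -
      ((g : Matrix.SpecialLinearGroup (Fin 2) ℤ) : Matrix (Fin 2) (Fin 2) ℤ) 0 1 *
      ((g : Matrix.SpecialLinearGroup (Fin 2) ℤ) : Matrix (Fin 2) (Fin 2) ℤ) 1 0 : ℤ) : ZMod 3)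
      = ((1 : ℤ) : ZMod 3) := by rw [hdet]
  push_cast at this
  rw [show ((((g : Matrix.SpecialLinearGroup (Fin 2) ℤ) : Matrix (Fin 2) (Fin 2) ℤ) 0 0 : ℤ) :
      ZMod 3) = aa g from rfl] at this
  rw [show ((((g : Matrix.SpecialLinearGroup (Fin 2) ℤ) : Matrix (Fin 2) (Fin 2) ℤ) 1 0 : ℤ) :
      ZMod 3) = cc g from rfl] at this
  rw [ha, hc, zero_mul, mul_zero, sub_zero] at this
  exact zero_ne_one this

lemma key (g g' : Gamma 2) :
    g⁻¹ * g' ∈ (Gamma 2 ⊓ lowerLeftDvd 6).subgroupOf (Gamma 2) ↔ F g = F g' := by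
  set A : Matrix.SpecialLinearGroup (Fin 2) ℤ := (g : Matrix.SpecialLinearGroup (Fin 2) ℤ)
  set B : Matrix.SpecialLinearGroup (Fin 2) ℤ := (g' : Matrix.SpecialLinearGroup (Fin 2) ℤ)
  have hentry : ((A⁻¹ * B : Matrix.SpecialLinearGroup (Fin 2) ℤ) :
      Matrix (Fin 2) (Fin 2) ℤ) 1 0 =
      -((A : Matrix (Fin 2) (Fin 2) ℤ) 1 0) * (B : Matrix (Fin 2) (Fin 2) ℤ) 0 0 +
      (A : Matrix (Fin 2) (Fin 2) ℤ) 0 0 * (B : Matrix (Fin 2) (Fin 2) ℤ) 1 0 := by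
    rw [Matrix.SpecialLinearGroup.coe_mul, Matrix.SpecialLinearGroup.coe_inv,
      Matrix.adjugate_fin_two, Matrix.mul_apply, Fin.sum_univ_two]
    simp
  -- c entries are even
  have hc2 : (2 : ℤ) ∣ (A : Matrix (Fin 2) (Fin 2) ℤ) 1 0 := by
    have := (Gamma_mem.mp g.property).2.2.1
    exact_mod_cast (ZMod.intCast_zmod_eq_zero_iff_dvd _ 2).mp this
  have hc2' : (2 : ℤ) ∣ (B : Matrix (Fin 2) (Fin 2) ℤ) 1 0 := by
    have := (Gamma_mem.mp g'.property).2.2.1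
    exact_mod_cast (ZMod.intCast_zmod_eq_zero_iff_dvd _ 2).mp this
  rw [Subgroup.mem_subgroupOf, Subgroup.mem_inf]
  have hmemG : A⁻¹ * B ∈ Gamma 2 := (g⁻¹ * g').property
  have hcoe : ((g⁻¹ * g' : Gamma 2) : Matrix.SpecialLinearGroup (Fin 2) ℤ) = A⁻¹ * B := rfl
  rw [hcoe]
  simp only [hmemG, true_and]
  show (6 : ℤ) ∣ ((A⁻¹ * B : Matrix.SpecialLinearGroup (Fin 2) ℤ) :
      Matrix (Fin 2) (Fin 2) ℤ) 1 0 ↔ _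
  rw [hentry]
  set c : ℤ := (A : Matrix (Fin 2) (Fin 2) ℤ) 1 0
  set a : ℤ := (A : Matrix (Fin 2) (Fin 2) ℤ) 0 0
  set c' : ℤ := (B : Matrix (Fin 2) (Fin 2) ℤ) 1 0
  set a' : ℤ := (B : Matrix (Fin 2) (Fin 2) ℤ) 0 0
  have h2 : (2 : ℤ) ∣ (-c * a' + a * c') := by
    obtain ⟨k, hk⟩ := hc2; obtain ⟨k', hk'⟩ := hc2'
    exact ⟨-k * a' + a * k', by rw [hk, hk']; ring⟩
  have h6 : (6 : ℤ) ∣ (-c * a' + a * c') ↔ (3 : ℤ) ∣ (-c * a' + a * c') := by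
    constructor
    · intro h; omega
    · intro h; omega
  rw [h6, show (3 : ℤ) = ((3 : ℕ) : ℤ) by norm_num, ← ZMod.intCast_zmod_eq_zero_iff_dvd]
  have hcast : ((-c * a' + a * c' : ℤ) : ZMod 3) = -(cc g) * aa g' + aa g * cc g' := by
    push_cast; rfl
  rw [hcast]
  have hne := not_both_zero g
  have hne' := not_both_zero g'
  unfold F
  constructor
  · intro h
    have heq : aa g * cc g' = cc g * aa g' := by linear_combination h
    by_cases ha : aa g = 0
    · have hc : cc g ≠ 0 := fun hc => hne ⟨ha, hc⟩
      have : aa g' = 0 := by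
        have : cc g * aa g' = 0 := by rw [← heq, ha, zero_mul]
        rcases mul_eq_zero.mp this with h1 | h1
        · exact absurd h1 hc
        · exact h1
      simp [ha, this]
    · by_cases ha' : aa g' = 0
      · exfalso
        have hc' : cc g' ≠ 0 := fun hc => hne' ⟨ha', hc⟩
        have : aa g * cc g' = 0 := by rw [heq, ha', mul_zero]
        rcases mul_eq_zero.mp this with h1 | h1
        · exact ha h1
        · exact hc' h1
      · rw [if_neg ha, if_neg ha', Option.some_inj, div_eq_div_iff ha ha']
        linear_combination -heq
  · intro h
    by_cases ha : aa g = 0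
    · have ha' : aa g' = 0 := by
        by_contra ha'
        simp [ha, ha'] at h
      rw [ha, ha', mul_zero, mul_comm, mul_zero]; ring
    · by_cases ha' : aa g' = 0
      · simp [ha, ha'] at h
      · rw [if_neg ha, if_neg ha', Option.some_inj] at h
        have heq := (div_eq_div_iff ha ha').mp h
        linear_combination - heq

lemma mem_gamma2 (m : Matrix.SpecialLinearGroup (Fin 2) ℤ)
    (h1 : ((m : Matrix (Fin 2) (Fin 2) ℤ) 0 0 : ZMod 2) = 1)
    (h3 : ((m : Matrix (Fin 2) (Fin 2) ℤ) 0 1 : ZMod 2) = 0)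
    (h4 : ((m : Matrix (Fin 2) (Fin 2) ℤ) 1 0 : ZMod 2) = 0)
    (h5 : ((m : Matrix (Fin 2) (Fin 2) ℤ) 1 1 : ZMod 2) = 1) : m ∈ Gamma 2 := by
  rw [Gamma_mem]
  exact ⟨h1, h3, h4, h5⟩

lemma F_surjective : Function.Surjective F := by
  intro x
  match x with
  | none =>
    have hdet : (!![3, 2; 4, 3] : Matrix (Fin 2) (Fin 2) ℤ).det = 1 := by
      simp [Matrix.det_fin_two_of]
    let m : Matrix.SpecialLinearGroup (Fin 2) ℤ := ⟨!![3, 2; 4, 3], hdet⟩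
    have hm : m ∈ Gamma 2 := by
      refine mem_gamma2 m ?_ ?_ ?_ ?_
      · show ((3 : ℤ) : ZMod 2) = 1; decide
      · show ((2 : ℤ) : ZMod 2) = 0; decide
      · show ((4 : ℤ) : ZMod 2) = 0; decide
      · show ((3 : ℤ) : ZMod 2) = 1; decide
    refine ⟨⟨m, hm⟩, ?_⟩
    unfold F aa
    rw [if_pos]
    show (((3 : ℤ)) : ZMod 3) = 0
    decide
  | some v =>
    obtain ⟨k, hk⟩ : ∃ k : ℤ, ((2 * k : ℤ) : ZMod 3) = v := by
      fin_cases v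
      · exact ⟨0, by change ((2 * 0 : ℤ) : ZMod 3) = 0; decide⟩
      · exact ⟨2, by change ((2 * 2 : ℤ) : ZMod 3) = 1; decide⟩
      · exact ⟨1, by change ((2 * 1 : ℤ) : ZMod 3) = 2; decide⟩
    have hdet : (!![1, 0; 2 * k, 1] : Matrix (Fin 2) (Fin 2) ℤ).det = 1 := by
      simp [Matrix.det_fin_two_of]
    let m : Matrix.SpecialLinearGroup (Fin 2) ℤ := ⟨!![1, 0; 2 * k, 1], hdet⟩
    have hm : m ∈ Gamma 2 := by
      refine mem_gamma2 m ?_ ?_ ?_ ?_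
      · show ((1 : ℤ) : ZMod 2) = 1; decide
      · show ((0 : ℤ) : ZMod 2) = 0; decide
      · show ((2 * k : ℤ) : ZMod 2) = 0
        exact (ZMod.intCast_zmod_eq_zero_iff_dvd _ 2).mpr ⟨k, rfl⟩
      · show ((1 : ℤ) : ZMod 2) = 1; decide
    refine ⟨⟨m, hm⟩, ?_⟩
    unfold F aa cc
    have haa : ((((m : Matrix (Fin 2) (Fin 2) ℤ)) 0 0 : ℤ) : ZMod 3) = 1 := by
      show (((1 : ℤ)) : ZMod 3) = 1
      decide
    rw [if_neg]
    · rw [haa, div_one]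
      show some (((2 * k : ℤ) : ZMod 3)) = some v
      rw [hk]
    · rw [haa]; exact one_ne_zero

end IndexKAux

/-- The subgroup `K = {A ∈ Γ(2) : 6 ∣ c}` (which equals `Γ(2) ∩ D₃⁻¹Γ(2)D₃` with
`D₃ = diag(3,1)`) has index 4 in the principal congruence subgroup `Γ(2)`. -/
theorem index_K_in_Gamma2_eq_four :
    ((Gamma 2 ⊓ lowerLeftDvd 6).relIndex (Gamma 2)) = 4 := by
  classical
  rw [Subgroup.relIndex, Subgroup.index]
  set H := (Gamma 2 ⊓ lowerLeftDvd 6).subgroupOf (Gamma 2)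
  have hwd : ∀ g g' : Gamma 2, QuotientGroup.leftRel H g g' → IndexKAux.F g = IndexKAux.F g' := by
    intro g g' h
    rw [QuotientGroup.leftRel_apply] at h
    exact (IndexKAux.key g g').mp h
  let Fbar : (Gamma 2 ⧸ H) → Option (ZMod 3) :=
    Quotient.lift IndexKAux.F hwd
  have hbij : Function.Bijective Fbar := by
    constructor
    · intro x y
      induction x using Quotient.inductionOn
      induction y using Quotient.inductionOn
      intro h
      apply Quotient.sound
      exact QuotientGroup.leftRel_apply.mpr ((IndexKAux.key _ _).mpr h)
    · intro v
      obtain ⟨g, hg⟩ := IndexKAux.F_surjective v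
      exact ⟨Quotient.mk _ g, hg⟩
  rw [Nat.card_eq_of_bijective Fbar hbij]
  simp [Nat.card_eq_fintype_card]
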